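/- Uniqueness after normalization in GF(2^130 − 5): for a 5-limb representation (ℓ₀,…,ℓ₄) with each ℓᵢ < 2^26, let m be the all-ones 26-bit mask (2^26 − 1) if ℓ₄ = ℓ₃ = ℓ₂ = ℓ₁ = 2^26 − 1 and ℓ₀ ≥ 2^26 − 5, and 0 otherwise; then subtracting (m AND (2^26 − 5)) from ℓ₀ and (m AND ℓᵢ) from ℓᵢ for i = 1..4 yields limbs ℓ'ᵢ < 2^26 whose evaluation eval' = Σ ℓ'ᵢ · 2^{26i} satisfies eval' = eval mod (2^130 − 5) and eval' < 2^130 − 5. -/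

import Mathlib

/-! STATEMENT 14: Uniqueness after normalization in GF(2^130 − 5). -/

theorem poly1305_normalize
    (l0 l1 l2 l3 l4 : ℕ)
    (h0 : l0 < 2 ^ 26) (h1 : l1 < 2 ^ 26) (h2 : l2 < 2 ^ 26)
    (h3 : l3 < 2 ^ 26) (h4 : l4 < 2 ^ 26) :
    let p : ℕ := 2 ^ 130 - 5
    let m : ℕ :=
      if l4 = 2 ^ 26 - 1 ∧ l3 = 2 ^ 26 - 1 ∧ l2 = 2 ^ 26 - 1 ∧ l1 = 2 ^ 26 - 1 ∧
          2 ^ 26 - 5 ≤ l0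
      then 2 ^ 26 - 1 else 0
    let l0' := l0 - (m &&& (2 ^ 26 - 5))
    let l1' := l1 - (m &&& l1)
    let l2' := l2 - (m &&& l2)
    let l3' := l3 - (m &&& l3)
    let l4' := l4 - (m &&& l4)
    let eval := l0 + l1 * 2 ^ 26 + l2 * 2 ^ 52 + l3 * 2 ^ 78 + l4 * 2 ^ 104
    let eval' := l0' + l1' * 2 ^ 26 + l2' * 2 ^ 52 + l3' * 2 ^ 78 + l4' * 2 ^ 104
    (l0' < 2 ^ 26 ∧ l1' < 2 ^ 26 ∧ l2' < 2 ^ 26 ∧ l3' < 2 ^ 26 ∧ l4' < 2 ^ 26) ∧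
    eval' = eval % p ∧ eval' < p := by
  have hmask : ∀ n : ℕ, n < 2 ^ 26 → (2 ^ 26 - 1) &&& n = n := by
    intro n hn
    rw [Nat.land_comm, Nat.and_two_pow_sub_one_eq_mod, Nat.mod_eq_of_lt hn]
  simp only
  split_ifs with hc
  · obtain ⟨e4, e3, e2, e1, e0⟩ := hc
    rw [hmask _ (by norm_num), hmask _ h1, hmask _ h2, hmask _ h3, hmask _ h4]
    subst e1 e2 e3 e4
    have heq : (l0 + (2 ^ 26 - 1) * 2 ^ 26 + (2 ^ 26 - 1) * 2 ^ 52 +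
        (2 ^ 26 - 1) * 2 ^ 78 + (2 ^ 26 - 1) * 2 ^ 104) % (2 ^ 130 - 5)
        = l0 - (2 ^ 26 - 5) := by
      rw [Nat.mod_eq_sub_mod (by omega), Nat.mod_eq_of_lt (by omega)]
      omega
    refine ⟨⟨by omega, by omega, by omega, by omega, by omega⟩, ?_, by omega⟩
    rw [heq]
    omega
  · simp only [Nat.zero_and, Nat.sub_zero]
    have hlt : l0 + l1 * 2 ^ 26 + l2 * 2 ^ 52 + l3 * 2 ^ 78 + l4 * 2 ^ 104
        < 2 ^ 130 - 5 := by
      push_neg at hc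
      rcases Nat.lt_or_ge l4 (2 ^ 26 - 1) with h | h
      · omega
      rcases Nat.lt_or_ge l3 (2 ^ 26 - 1) with h' | h'
      · omega
      rcases Nat.lt_or_ge l2 (2 ^ 26 - 1) with h'' | h''
      · omega
      rcases Nat.lt_or_ge l1 (2 ^ 26 - 1) with h''' | h'''
      · omega
      omega
    exact ⟨⟨h0, h1, h2, h3, h4⟩, (Nat.mod_eq_of_lt hlt).symm, hlt⟩
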